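/- If X ~ LL(σ₁,π₁) and Y ~ LL(σ₂,π₂) are independent, then P(Y < X) = ∫₀¹ f_X(x)·F_Y(x) dx equals σ₁/(σ₁+σ₂)³ · [σ₁(σ₁+3σ₂) + 2π₁σ₂² − 2π₂σ₁σ₂ + π₁π₂(σ₁σ₂ − σ₂²)]. -/

import Mathlib

open Real MeasureTheory Set Filter Topology intervalIntegral

private lemma ll_contAt (t d0 d1 d2 : ℝ) {x : ℝ} (hx : x ≠ 0) :
    ContinuousAt (fun x : ℝ => x ^ t * (d0 + d1 * Real.log x + d2 * Real.log x ^ 2)) x := by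
  have h1 : ContinuousAt (fun x : ℝ => x ^ t) x := Real.continuousAt_rpow_const x t (Or.inl hx)
  have h2 : ContinuousAt Real.log x := Real.continuousAt_log hx
  exact h1.mul (((continuousAt_const.add (continuousAt_const.mul h2)).add
    (continuousAt_const.mul (h2.pow 2))))

private lemma ll_tendsto (t d0 d1 d2 : ℝ) (ht : 0 < t) :
    Tendsto (fun x : ℝ => x ^ t * (d0 + d1 * Real.log x + d2 * Real.log x ^ 2))
      (𝓝[>] (0:ℝ)) (𝓝 0) := by
  have h0 : Tendsto (fun x : ℝ => x ^ t) (𝓝[>] (0:ℝ)) (𝓝 0) := by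
    have := (Real.continuousAt_rpow_const 0 t (Or.inr ht.le)).tendsto
    rw [Real.zero_rpow ht.ne'] at this
    exact this.mono_left nhdsWithin_le_nhds
  have h1 : Tendsto (fun x : ℝ => Real.log x * x ^ t) (𝓝[>] (0:ℝ)) (𝓝 0) :=
    tendsto_log_mul_rpow_nhdsGT_zero ht
  have h1' : Tendsto (fun x : ℝ => Real.log x * x ^ (t/2)) (𝓝[>] (0:ℝ)) (𝓝 0) :=
    tendsto_log_mul_rpow_nhdsGT_zero (by linarith)
  have h2 : Tendsto (fun x : ℝ => (Real.log x * x ^ (t/2)) ^ 2) (𝓝[>] (0:ℝ)) (𝓝 0) := by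
    have := h1'.mul h1'
    rw [mul_zero] at this
    simpa [pow_two] using this
  have key : Tendsto (fun x : ℝ =>
      d0 * x ^ t + d1 * (Real.log x * x ^ t) + d2 * (Real.log x * x ^ (t/2)) ^ 2)
      (𝓝[>] (0:ℝ)) (𝓝 0) := by
    have := ((h0.const_mul d0).add (h1.const_mul d1)).add (h2.const_mul d2)
    simpa using this
  refine key.congr' ?_
  filter_upwards [self_mem_nhdsWithin] with x (hx : 0 < x)
  have hsplit : x ^ (t/2) * x ^ (t/2) = x ^ t := by
    rw [← Real.rpow_add hx]; norm_num
  have h : (x ^ (t/2)) ^ 2 = x ^ t := by rw [sq, hsplit]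
  rw [mul_pow, h]
  ring

private lemma ll_contOn (t d0 d1 d2 : ℝ) (ht : 0 < t) :
    ContinuousOn (fun x : ℝ => x ^ t * (d0 + d1 * Real.log x + d2 * Real.log x ^ 2))
      (Icc (0:ℝ) 1) := by
  intro x hx
  rcases eq_or_lt_of_le hx.1 with h | h
  · subst h
    have hIoi : ContinuousWithinAt
        (fun x : ℝ => x ^ t * (d0 + d1 * Real.log x + d2 * Real.log x ^ 2)) (Ioi 0) 0 := by
      rw [ContinuousWithinAt]
      have hval : ((0:ℝ) ^ t * (d0 + d1 * Real.log 0 + d2 * Real.log 0 ^ 2)) = 0 := by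
        rw [Real.zero_rpow ht.ne']; ring
      rw [hval]
      exact ll_tendsto t d0 d1 d2 ht
    exact (continuousWithinAt_Ioi_iff_Ici.mp hIoi).mono Icc_subset_Ici_self
  · exact (ll_contAt t d0 d1 d2 h.ne').continuousWithinAt

private lemma ll_integrable (s c0 c1 c2 : ℝ) (hs : 0 < s) :
    IntervalIntegrable (fun x : ℝ => x ^ (s-1) * (c0 + c1 * Real.log x + c2 * Real.log x ^ 2))
      volume 0 1 := by
  rw [intervalIntegrable_iff_integrableOn_Ioc_of_le zero_le_one]
  set g : ℝ → ℝ := fun x => x ^ (s/2) * (|c0| + (-|c1|) * Real.log x + |c2| * Real.log x ^ 2)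
    with hg
  obtain ⟨C, hC⟩ := isCompact_Icc.exists_bound_of_continuousOn
    (ll_contOn (s/2) |c0| (-|c1|) |c2| (by linarith))
  have hmono : IntervalIntegrable (fun x : ℝ => C * x ^ (s/2 - 1)) volume 0 1 :=
    (intervalIntegral.intervalIntegrable_rpow' (by linarith)).const_mul C
  rw [intervalIntegrable_iff_integrableOn_Ioc_of_le zero_le_one] at hmono
  refine hmono.mono' ?_ ?_
  · refine ContinuousOn.aestronglyMeasurable ?_ measurableSet_Ioc
    intro x hx
    exact (ll_contAt (s-1) c0 c1 c2 hx.1.ne').continuousWithinAt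
  · filter_upwards [ae_restrict_mem measurableSet_Ioc] with x hx
    have hx0 : (0:ℝ) < x := hx.1
    have hL : Real.log x ≤ 0 := Real.log_nonpos hx0.le hx.2
    have hxp : (0:ℝ) < x ^ (s/2 - 1) := Real.rpow_pos_of_pos hx0 _
    have hsplit : x ^ (s - 1) = x ^ (s/2 - 1) * x ^ (s/2) := by
      rw [← Real.rpow_add hx0]; ring_nf
    have hb1 : |c0 + c1 * Real.log x + c2 * Real.log x ^ 2|
        ≤ |c0| + (-|c1|) * Real.log x + |c2| * Real.log x ^ 2 := by
      have h1 := abs_add_le (c0 + c1 * Real.log x) (c2 * Real.log x ^ 2)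
      have h2 := abs_add_le c0 (c1 * Real.log x)
      have h3 : |c1 * Real.log x| = |c1| * (-Real.log x) := by
        rw [abs_mul, abs_of_nonpos hL]
      have h4 : |c2 * Real.log x ^ 2| = |c2| * Real.log x ^ 2 := by
        rw [abs_mul, abs_pow, sq_abs]
      nlinarith [abs_nonneg (c0 + c1 * Real.log x)]
    have hgC : g x ≤ C := le_trans (le_abs_self _) (hC x ⟨hx0.le, hx.2⟩)
    have hx1 : (0:ℝ) ≤ x ^ (s-1) := (Real.rpow_pos_of_pos hx0 _).le
    calc ‖x ^ (s - 1) * (c0 + c1 * Real.log x + c2 * Real.log x ^ 2)‖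
        = x ^ (s-1) * |c0 + c1 * Real.log x + c2 * Real.log x ^ 2| := by
          rw [Real.norm_eq_abs, abs_mul, abs_of_nonneg hx1]
      _ ≤ x ^ (s/2 - 1) * g x := by
          rw [hsplit, mul_assoc]
          exact mul_le_mul_of_nonneg_left (mul_le_mul_of_nonneg_left hb1
            (Real.rpow_pos_of_pos hx0 _).le) hxp.le
      _ ≤ C * x ^ (s/2 - 1) := by
          rw [mul_comm]
          exact mul_le_mul_of_nonneg_right hgC hxp.le

private lemma ll_integral (s c0 c1 c2 : ℝ) (hs : 0 < s) :
    ∫ x in (0:ℝ)..1, x ^ (s-1) * (c0 + c1 * Real.log x + c2 * Real.log x ^ 2)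
      = c0/s - c1/s^2 + 2*c2/s^3 := by
  set d2 : ℝ := c2/s with hd2
  set d1 : ℝ := c1/s - 2*c2/s^2 with hd1
  set d0 : ℝ := c0/s - c1/s^2 + 2*c2/s^3 with hd0
  set F : ℝ → ℝ := fun x => x ^ s * (d0 + d1 * Real.log x + d2 * Real.log x ^ 2) with hF
  have hderiv : ∀ x ∈ Ioo (0:ℝ) 1, HasDerivAt F
      (x ^ (s-1) * (c0 + c1 * Real.log x + c2 * Real.log x ^ 2)) x := by
    intro x hx
    have hx0 : (0:ℝ) < x := hx.1
    have h1 : HasDerivAt (fun x : ℝ => x ^ s) (s * x ^ (s-1)) x :=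
      Real.hasDerivAt_rpow_const (Or.inl hx0.ne')
    have hlog : HasDerivAt Real.log x⁻¹ x := Real.hasDerivAt_log hx0.ne'
    have h2 : HasDerivAt (fun x : ℝ => d0 + d1 * Real.log x + d2 * Real.log x ^ 2)
        (d1 * x⁻¹ + d2 * (2 * Real.log x * x⁻¹)) x := by
      have := ((hlog.const_mul d1).const_add d0).add
        (((hlog.pow 2).const_mul d2))
      refine this.congr_deriv ?_
      norm_num
    have := h1.mul h2
    refine this.congr_deriv ?_
    have hxs : x ^ s = x ^ (s-1) * x := by
      rw [← Real.rpow_add_one hx0.ne']; ring_nf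
    have hinv : x * x⁻¹ = 1 := mul_inv_cancel₀ hx0.ne'
    rw [hxs]
    field_simp [hd0, hd1, hd2]
    rw [hd0, hd1, hd2]
    field_simp [hs.ne']
    ring
  have hcont : ContinuousOn F (Icc 0 1) := ll_contOn s d0 d1 d2 hs
  have hint := ll_integrable s c0 c1 c2 hs
  have := intervalIntegral.integral_eq_sub_of_hasDeriv_right_of_le zero_le_one hcont
    (fun x hx => (hderiv x hx).hasDerivWithinAt) hint
  rw [this]
  have hF1 : F 1 = d0 := by simp [hF]
  have hF0 : F 0 = 0 := by
    simp [hF, Real.zero_rpow hs.ne']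
  rw [hF1, hF0, sub_zero, hd0]

theorem logLindley_stress_strength (σ₁ π₁ σ₂ π₂ : ℝ) (hσ₁ : 0 < σ₁) (hσ₂ : 0 < σ₂)
    (hπ₁0 : 0 ≤ π₁) (hπ₁1 : π₁ ≤ 1) (hπ₂0 : 0 ≤ π₂) (hπ₂1 : π₂ ≤ 1) :
    ∫ x in (0:ℝ)..1,
        (σ₁ * (π₁ + σ₁ * (π₁ - 1) * Real.log x) * x ^ (σ₁ - 1)) *
          ((1 + σ₂ * (π₂ - 1) * Real.log x) * x ^ σ₂) =
      σ₁ / (σ₁ + σ₂) ^ 3 *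
        (σ₁ * (σ₁ + 3 * σ₂) + 2 * π₁ * σ₂ ^ 2 - 2 * π₂ * σ₁ * σ₂ +
          π₁ * π₂ * (σ₁ * σ₂ - σ₂ ^ 2)) := by
  set s : ℝ := σ₁ + σ₂ with hs_def
  have hs : 0 < s := by positivity
  set c0 : ℝ := σ₁ * π₁ with hc0
  set c1 : ℝ := σ₁ * (σ₁ * (π₁ - 1) + π₁ * (σ₂ * (π₂ - 1))) with hc1
  set c2 : ℝ := σ₁ * (σ₁ * (π₁ - 1)) * (σ₂ * (π₂ - 1)) with hc2
  have hcongr : ∫ x in (0:ℝ)..1,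
      (σ₁ * (π₁ + σ₁ * (π₁ - 1) * Real.log x) * x ^ (σ₁ - 1)) *
        ((1 + σ₂ * (π₂ - 1) * Real.log x) * x ^ σ₂)
      = ∫ x in (0:ℝ)..1, x ^ (s-1) * (c0 + c1 * Real.log x + c2 * Real.log x ^ 2) := by
    refine intervalIntegral.integral_congr_ae ?_
    filter_upwards with x hx
    rw [Set.uIoc_of_le (zero_le_one)] at hx
    have hx0 : (0:ℝ) < x := hx.1
    have hsplit : x ^ (s - 1) = x ^ (σ₁ - 1) * x ^ σ₂ := by
      rw [← Real.rpow_add hx0, hs_def]; ring_nf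
    rw [hsplit, hc0, hc1, hc2]
    ring
  rw [hcongr, ll_integral s c0 c1 c2 hs, hc0, hc1, hc2, hs_def]
  have h1 : σ₁ + σ₂ ≠ 0 := by positivity
  field_simp
  ring
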